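/- For x > 0, the series ∑_{r=0}^∞ Γ(r/3 + 1/3)/Γ(r/3 + 7/3) · (-x)^r / r! equals 3(1/x - 6/x^4) + 9 x^{-2} e^{-x} (1 + 2/x + 2/x^2). -/

import Mathlib

open Real

/-- For `x > 0`, the Wright function `₁Ψ₁` with `α = β = 1/3`, `a = 1/3`, `b = 7/3`
evaluated at `-x` has the closed form
`3(1/x - 6/x⁴) + 9 x⁻² e⁻ˣ (1 + 2/x + 2/x²)`. -/
theorem wright_one_psi_one_closed_form (x : ℝ) (hx : 0 < x) :
    ∑' r : ℕ, Real.Gamma ((r : ℝ) / 3 + 1 / 3) / Real.Gamma ((r : ℝ) / 3 + 7 / 3) *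
        (-x) ^ r / (Nat.factorial r) =
      3 * (1 / x - 6 / x ^ 4) +
        9 * x ^ (-2 : ℤ) * Real.exp (-x) * (1 + 2 / x + 2 / x ^ 2) := by
  have hx0 : x ≠ 0 := ne_of_gt hx
  have hzp : x ^ (-2 : ℤ) = (x ^ 2)⁻¹ := by
    rw [show (-2 : ℤ) = -(2 : ℕ) by norm_num, zpow_neg, zpow_natCast]
  rw [hzp]
  -- exponential series
  have hE : HasSum (fun n : ℕ => (-x) ^ n / n.factorial) (Real.exp (-x)) := by
    rw [Real.exp_eq_exp_ℝ]
    exact NormedSpace.expSeries_div_hasSum_exp (-x)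
  -- shifted series
  have hshift : ∀ k : ℕ, HasSum (fun n : ℕ => (-x) ^ (n + k) / (n + k).factorial)
      (Real.exp (-x) - ∑ i ∈ Finset.range k, (-x) ^ i / i.factorial) := by
    intro k
    exact (hasSum_nat_add_iff' k).mpr hE
  have h2 := ((hshift 2).mul_left (9 * (x ^ 2)⁻¹))
  have h3 := ((hshift 3).mul_left (18 * (x ^ 3)⁻¹))
  have h4 := ((hshift 4).mul_left (18 * (x ^ 4)⁻¹))
  have hsum := (h2.add h3).add h4
  -- termwise equality
  have hterm : ∀ r : ℕ,
      Real.Gamma ((r : ℝ) / 3 + 1 / 3) / Real.Gamma ((r : ℝ) / 3 + 7 / 3) *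
        (-x) ^ r / (Nat.factorial r) =
      9 * (x ^ 2)⁻¹ * ((-x) ^ (r + 2) / (r + 2).factorial) +
        18 * (x ^ 3)⁻¹ * ((-x) ^ (r + 3) / (r + 3).factorial) +
        18 * (x ^ 4)⁻¹ * ((-x) ^ (r + 4) / (r + 4).factorial) := by
    intro r
    have ht : (0 : ℝ) < (r : ℝ) / 3 + 1 / 3 := by positivity
    have e7 : (r : ℝ) / 3 + 7 / 3 = ((r : ℝ) / 3 + 4 / 3) + 1 := by ring
    have e4 : (r : ℝ) / 3 + 4 / 3 = ((r : ℝ) / 3 + 1 / 3) + 1 := by ring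
    rw [e7, Real.Gamma_add_one (by positivity), e4, Real.Gamma_add_one (ne_of_gt ht)]
    have hG : Real.Gamma ((r : ℝ) / 3 + 1 / 3) ≠ 0 := ne_of_gt (Real.Gamma_pos_of_pos ht)
    have hf2 : (r + 2).factorial = (r + 2) * (r + 1) * r.factorial := by
      rw [Nat.factorial_succ, Nat.factorial_succ]; ring
    have hf3 : (r + 3).factorial = (r + 3) * (r + 2) * (r + 1) * r.factorial := by
      rw [Nat.factorial_succ, hf2]; ring
    have hf4 : (r + 4).factorial = (r + 4) * (r + 3) * (r + 2) * (r + 1) * r.factorial := by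
      rw [Nat.factorial_succ, hf3]; ring
    have hfr : (r.factorial : ℝ) ≠ 0 := Nat.cast_ne_zero.mpr r.factorial_ne_zero
    rw [hf2, hf3, hf4]
    push_cast
    rw [pow_add, pow_add, pow_add]
    have h1 : ((r : ℝ) + 1) ≠ 0 := by positivity
    have h2' : ((r : ℝ) + 2) ≠ 0 := by positivity
    have h3' : ((r : ℝ) + 3) ≠ 0 := by positivity
    have h4' : ((r : ℝ) + 4) ≠ 0 := by positivity
    field_simp
    ring
  rw [tsum_congr hterm, hsum.tsum_eq]
  -- final algebra
  simp only [Finset.sum_range_succ, Finset.sum_range_zero]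
  norm_num [Nat.factorial]
  have hexp : Real.exp (-x) ≠ 0 := Real.exp_ne_zero _
  field_simp
  ring
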